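/- Let ε > 0, γ ∈ (0, 1/2), p∘ ∈ (0,1], p ∈ [0,1], and let N be a positive integer with N ≥ 3·e^{ε}·log(4/γ) / ((1−e^{−ε})²·p∘). Let X be a binomial random variable with parameters N and p, and set p̂ = X/N. Then with probability at least 1 − γ the following two bounds both hold: (i) |p̂ − p| ≤ ε·(p + p∘); and (ii) if p ≥ e^{−ε}·p∘ then e^{−ε}·p ≤ p̂ ≤ e^{ε}·p, while if p < e^{−ε}·p∘ then p̂ < p∘. -/

import Mathlib

open Finset Real
open scoped ENNReal

noncomputable def bf (N : ℕ) (p : ℝ) (k : ℕ) : ℝ := (N.choose k : ℝ) * p^k * (1-p)^(N-k)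

lemma bf_nonneg {N : ℕ} {p : ℝ} (hp0 : 0 ≤ p) (hp1 : p ≤ 1) (k : ℕ) : 0 ≤ bf N p k := by
  unfold bf
  have : (0:ℝ) ≤ 1 - p := by linarith
  positivity

lemma bf_mgf (N : ℕ) (p : ℝ) (x : ℝ) :
    ∑ k ∈ range (N+1), bf N p k * x^k = (1 - p + p*x)^N := by
  have := add_pow (p*x) (1-p) N
  rw [show (1:ℝ) - p + p*x = p*x + (1-p) by ring, this]
  apply Finset.sum_congr rfl
  intro k hk
  unfold bf
  ring

lemma chernoff_upper {N : ℕ} {p : ℝ} (hp0 : 0 ≤ p) (hp1 : p ≤ 1) (t c : ℝ) (ht : 0 ≤ t) :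
    ∑ k ∈ (range (N+1)).filter (fun k : ℕ => c ≤ (k:ℝ)), bf N p k
      ≤ Real.exp ((N:ℝ)*p*(Real.exp t - 1) - t*c) := by
  have step1 : ∑ k ∈ (range (N+1)).filter (fun k : ℕ => c ≤ (k:ℝ)), bf N p k
      ≤ ∑ k ∈ range (N+1), bf N p k * (Real.exp t)^k * Real.exp (-t*c) := by
    calc ∑ k ∈ (range (N+1)).filter (fun k : ℕ => c ≤ (k:ℝ)), bf N p k
        ≤ ∑ k ∈ (range (N+1)).filter (fun k : ℕ => c ≤ (k:ℝ)),
            bf N p k * (Real.exp t)^k * Real.exp (-t*c) := by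
          apply Finset.sum_le_sum
          intro k hk
          rw [Finset.mem_filter] at hk
          have hkc : c ≤ (k:ℝ) := hk.2
          have h1 : (1:ℝ) ≤ (Real.exp t)^k * Real.exp (-t*c) := by
            rw [← Real.exp_nat_mul, ← Real.exp_add]
            have : 0 ≤ (k:ℝ)*t + (-t*c) := by nlinarith
            calc (1:ℝ) = Real.exp 0 := by simp
            _ ≤ _ := Real.exp_le_exp.2 (by linarith)
          calc bf N p k = bf N p k * 1 := by ring
          _ ≤ _ := by
              rw [mul_assoc]
              exact mul_le_mul_of_nonneg_left h1 (bf_nonneg hp0 hp1 k)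
      _ ≤ ∑ k ∈ range (N+1), bf N p k * (Real.exp t)^k * Real.exp (-t*c) := by
          apply Finset.sum_le_sum_of_subset_of_nonneg (Finset.filter_subset _ _)
          intro k _ _
          have h1 := bf_nonneg (N:=N) hp0 hp1 k
          positivity
  have step2 : ∑ k ∈ range (N+1), bf N p k * (Real.exp t)^k * Real.exp (-t*c)
      = (1 - p + p*Real.exp t)^N * Real.exp (-t*c) := by
    rw [← Finset.sum_mul, bf_mgf]
  have step3 : (1 - p + p*Real.exp t)^N ≤ Real.exp ((N:ℝ)*p*(Real.exp t - 1)) := by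
    have hbase : 0 ≤ 1 - p + p*Real.exp t := by nlinarith [Real.exp_pos t]
    have h1 : 1 - p + p*Real.exp t ≤ Real.exp (p*(Real.exp t - 1)) := by
      have := Real.add_one_le_exp (p*(Real.exp t - 1))
      linarith
    calc (1 - p + p*Real.exp t)^N ≤ (Real.exp (p*(Real.exp t - 1)))^N :=
          pow_le_pow_left₀ hbase h1 N
    _ = Real.exp ((N:ℝ)*p*(Real.exp t - 1)) := by
        rw [← Real.exp_nat_mul]; ring_nf
  calc ∑ k ∈ (range (N+1)).filter (fun k : ℕ => c ≤ (k:ℝ)), bf N p k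
      ≤ (1 - p + p*Real.exp t)^N * Real.exp (-t*c) := by rw [← step2]; exact step1
  _ ≤ Real.exp ((N:ℝ)*p*(Real.exp t - 1)) * Real.exp (-t*c) :=
      mul_le_mul_of_nonneg_right step3 (Real.exp_pos _).le
  _ = Real.exp ((N:ℝ)*p*(Real.exp t - 1) - t*c) := by rw [← Real.exp_add]; ring_nf

lemma chernoff_lower {N : ℕ} {p : ℝ} (hp0 : 0 ≤ p) (hp1 : p ≤ 1) (t c : ℝ) (ht : 0 ≤ t) :
    ∑ k ∈ (range (N+1)).filter (fun k : ℕ => (k:ℝ) ≤ c), bf N p k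
      ≤ Real.exp ((N:ℝ)*p*(Real.exp (-t) - 1) + t*c) := by
  have step1 : ∑ k ∈ (range (N+1)).filter (fun k : ℕ => (k:ℝ) ≤ c), bf N p k
      ≤ ∑ k ∈ range (N+1), bf N p k * (Real.exp (-t))^k * Real.exp (t*c) := by
    calc ∑ k ∈ (range (N+1)).filter (fun k : ℕ => (k:ℝ) ≤ c), bf N p k
        ≤ ∑ k ∈ (range (N+1)).filter (fun k : ℕ => (k:ℝ) ≤ c),
            bf N p k * (Real.exp (-t))^k * Real.exp (t*c) := by
          apply Finset.sum_le_sum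
          intro k hk
          rw [Finset.mem_filter] at hk
          have hkc : (k:ℝ) ≤ c := hk.2
          have h1 : (1:ℝ) ≤ (Real.exp (-t))^k * Real.exp (t*c) := by
            rw [← Real.exp_nat_mul, ← Real.exp_add]
            calc (1:ℝ) = Real.exp 0 := by simp
            _ ≤ _ := Real.exp_le_exp.2 (by nlinarith)
          calc bf N p k = bf N p k * 1 := by ring
          _ ≤ _ := by
              rw [mul_assoc]
              exact mul_le_mul_of_nonneg_left h1 (bf_nonneg hp0 hp1 k)
      _ ≤ ∑ k ∈ range (N+1), bf N p k * (Real.exp (-t))^k * Real.exp (t*c) := by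
          apply Finset.sum_le_sum_of_subset_of_nonneg (Finset.filter_subset _ _)
          intro k _ _
          have h1 := bf_nonneg (N:=N) hp0 hp1 k
          positivity
  have step2 : ∑ k ∈ range (N+1), bf N p k * (Real.exp (-t))^k * Real.exp (t*c)
      = (1 - p + p*Real.exp (-t))^N * Real.exp (t*c) := by
    rw [← Finset.sum_mul, bf_mgf]
  have step3 : (1 - p + p*Real.exp (-t))^N ≤ Real.exp ((N:ℝ)*p*(Real.exp (-t) - 1)) := by
    have hbase : 0 ≤ 1 - p + p*Real.exp (-t) := by nlinarith [Real.exp_pos (-t)]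
    have h1 : 1 - p + p*Real.exp (-t) ≤ Real.exp (p*(Real.exp (-t) - 1)) := by
      have := Real.add_one_le_exp (p*(Real.exp (-t) - 1))
      linarith
    calc (1 - p + p*Real.exp (-t))^N ≤ (Real.exp (p*(Real.exp (-t) - 1)))^N :=
          pow_le_pow_left₀ hbase h1 N
    _ = _ := by rw [← Real.exp_nat_mul]; ring_nf
  calc ∑ k ∈ (range (N+1)).filter (fun k : ℕ => (k:ℝ) ≤ c), bf N p k
      ≤ (1 - p + p*Real.exp (-t))^N * Real.exp (t*c) := by rw [← step2]; exact step1
  _ ≤ Real.exp ((N:ℝ)*p*(Real.exp (-t) - 1)) * Real.exp (t*c) :=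
      mul_le_mul_of_nonneg_right step3 (Real.exp_pos _).le
  _ = _ := (Real.exp_add _ _).symm

private lemma exp_neg_le_quad (t : ℝ) (ht : 0 ≤ t) : Real.exp (-t) ≤ 1 - t + t^2/2 := by
  have h : MonotoneOn (fun t : ℝ => 1 - t + t^2/2 - Real.exp (-t)) (Set.Ici 0) := by
    apply monotoneOn_of_deriv_nonneg (convex_Ici 0)
    · fun_prop
    · fun_prop
    · intro x hx
      have hd : deriv (fun t : ℝ => 1 - t + t^2/2 - Real.exp (-t)) x
          = -1 + x + Real.exp (-x) := by
        have : HasDerivAt (fun t : ℝ => 1 - t + t^2/2 - Real.exp (-t))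
            (-1 + x + Real.exp (-x)) x := by
          have h1 : HasDerivAt (fun t : ℝ => Real.exp (-t)) (-Real.exp (-x)) x := by
            have h := (Real.hasDerivAt_exp (-x)).comp x (hasDerivAt_neg x)
            simp only [mul_neg, mul_one] at h
            exact h
          have h2 : HasDerivAt (fun t : ℝ => 1 - t + t^2/2) (-1 + x) x := by
            have := ((hasDerivAt_pow 2 x).div_const 2)
            have h3 := ((hasDerivAt_const x (1:ℝ)).sub (hasDerivAt_id x)).add this
            exact h3.congr_deriv (by ring)
          exact (h2.sub h1).congr_deriv (by ring)
        exact this.deriv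
      rw [hd]
      have := Real.add_one_le_exp (-x)
      linarith
  have := h (Set.self_mem_Ici) (Set.mem_Ici.2 ht) ht
  simp at this
  linarith [this]

private lemma log_ge_ineq (u : ℝ) (hu : 0 ≤ u) : 2*u/(2+u) ≤ Real.log (1+u) := by
  have h : MonotoneOn (fun u : ℝ => Real.log (1+u) - 2*u/(2+u)) (Set.Ici 0) := by
    apply monotoneOn_of_deriv_nonneg (convex_Ici 0)
    · apply ContinuousOn.sub
      · apply ContinuousOn.log (by fun_prop)
        intro x hx; simp at hx; nlinarith
      · apply ContinuousOn.div (by fun_prop) (by fun_prop)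
        intro x hx; simp at hx; nlinarith
    · intro x hx
      rw [interior_Ici] at hx
      simp only [Set.mem_Ioi] at hx
      apply DifferentiableAt.differentiableWithinAt
      apply DifferentiableAt.sub
      · exact (Real.differentiableAt_log (by nlinarith)).comp x (by fun_prop)
      · exact DifferentiableAt.div (by fun_prop) (by fun_prop) (by nlinarith)
    · intro x hx
      rw [interior_Ici] at hx
      simp only [Set.mem_Ioi] at hx
      have h1x : (0:ℝ) < 1 + x := by linarith
      have h2x : (0:ℝ) < 2 + x := by linarith
      have hd : deriv (fun u : ℝ => Real.log (1+u) - 2*u/(2+u)) x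
          = 1/(1+x) - 4/(2+x)^2 := by
        have hlog : HasDerivAt (fun u : ℝ => Real.log (1+u)) (1/(1+x)) x := by
          have := (Real.hasDerivAt_log (ne_of_gt h1x)).comp x
            ((hasDerivAt_const x (1:ℝ)).add (hasDerivAt_id x))
          simpa [Function.comp_def] using this
        have hdiv : HasDerivAt (fun u : ℝ => 2*u/(2+u)) (4/(2+x)^2) x := by
          have hnum : HasDerivAt (fun u : ℝ => 2*u) 2 x := by
            simpa using (hasDerivAt_id x).const_mul (2:ℝ)
          have hden : HasDerivAt (fun u : ℝ => 2+u) 1 x := by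
            simpa using (hasDerivAt_id x).const_add (2:ℝ)
          have := hnum.div hden (ne_of_gt h2x)
          exact this.congr_deriv (by ring)
        exact (hlog.sub hdiv).deriv
      rw [hd]
      have : 1/(1+x) - 4/(2+x)^2 = x^2 / ((1+x)*(2+x)^2) := by field_simp; ring
      rw [this]
      positivity
  have := h (Set.self_mem_Ici) (Set.mem_Ici.2 hu) hu
  simp at this
  linarith [this]


lemma bernstein_upper {N : ℕ} {p : ℝ} (hp0 : 0 ≤ p) (hp1 : p ≤ 1) {a : ℝ} (ha : 0 < a) :
    ∑ k ∈ (range (N+1)).filter (fun k : ℕ => (N:ℝ)*(p+a) ≤ (k:ℝ)), bf N p k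
      ≤ Real.exp (-((N:ℝ)*a^2/(2*p+a))) := by
  rcases eq_or_lt_of_le hp0 with hp | hp
  · -- p = 0
    have h := chernoff_upper (N:=N) hp0 hp1 1 ((N:ℝ)*(p+a)) zero_le_one
    apply h.trans
    apply Real.exp_le_exp.2
    rw [← hp]
    have h2 : (N:ℝ)*a^2/(2*0+a) = (N:ℝ)*a := by
      rw [show (2:ℝ)*0+a = a by ring]
      field_simp
    rw [h2]
    nlinarith [Real.exp_pos (1:ℝ), Nat.cast_nonneg (α := ℝ) N, ha]
  · -- p > 0
    set t := Real.log (1 + a/p) with hts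
    have hfrac : 0 < a/p := div_pos ha hp
    have ht0 : 0 ≤ t := Real.log_nonneg (by linarith)
    have hexpt : Real.exp t = 1 + a/p := Real.exp_log (by linarith)
    have h := chernoff_upper (N:=N) hp0 hp1 t ((N:ℝ)*(p+a)) ht0
    apply h.trans
    apply Real.exp_le_exp.2
    rw [hexpt]
    have hlog : 2*(a/p)/(2+(a/p)) ≤ t := log_ge_ineq (a/p) hfrac.le
    have hkey : a^2/(2*p+a) ≤ (p+a)*t - a := by
      have h2 : 2*(a/p)/(2+(a/p)) = 2*a/(2*p+a) := by
        rw [div_eq_div_iff (by positivity) (by positivity)]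
        field_simp
      have h3 : 2*a/(2*p+a) ≤ t := h2 ▸ hlog
      have h4 : (p+a)*(2*a/(2*p+a)) - a = a^2/(2*p+a) := by
        field_simp
        ring
      nlinarith [mul_le_mul_of_nonneg_left h3 (by linarith : (0:ℝ) ≤ p + a)]
    have hN0 : (0:ℝ) ≤ (N:ℝ) := Nat.cast_nonneg N
    have := mul_le_mul_of_nonneg_left hkey hN0
    have hexpand : (N:ℝ)*p*(1 + a/p - 1) - t*((N:ℝ)*(p+a)) = -((N:ℝ)*((p+a)*t - a)) := by
      field_simp
      ring
    rw [hexpand]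
    rw [neg_le_neg_iff]
    calc (N:ℝ)*a^2/(2*p+a) = (N:ℝ)*(a^2/(2*p+a)) := by ring
    _ ≤ (N:ℝ)*((p+a)*t - a) := this

lemma bernstein_lower {N : ℕ} {p : ℝ} (hp0 : 0 < p) (hp1 : p ≤ 1) {b : ℝ} (hb : 0 < b)
    (hbp : b ≤ p) :
    ∑ k ∈ (range (N+1)).filter (fun k : ℕ => (k:ℝ) ≤ (N:ℝ)*(p-b)), bf N p k
      ≤ Real.exp (-((N:ℝ)*b^2/(2*p))) := by
  set t := b/p with hts
  have ht0 : 0 ≤ t := by positivity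
  have h := chernoff_lower (N:=N) hp0.le hp1 t ((N:ℝ)*(p-b)) ht0
  apply h.trans
  apply Real.exp_le_exp.2
  have hq : Real.exp (-t) - 1 ≤ -t + t^2/2 := by
    have := exp_neg_le_quad t ht0
    linarith
  have hN0 : (0:ℝ) ≤ (N:ℝ) := Nat.cast_nonneg N
  have h1 : (N:ℝ)*p*(Real.exp (-t) - 1) ≤ (N:ℝ)*p*(-t + t^2/2) :=
    mul_le_mul_of_nonneg_left hq (by positivity)
  have h2 : (N:ℝ)*p*(-t + t^2/2) + t*((N:ℝ)*(p-b)) = -((N:ℝ)*b^2/(2*p)) := by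
    rw [hts]
    field_simp
    ring
  linarith

lemma binomial_apply_ofReal {N : ℕ} {p : ℝ} (hp0 : 0 ≤ p) (hp1 : p ≤ 1) (i : Fin (N+1)) :
    (PMF.binomial (Real.toNNReal p) (Real.toNNReal_le_one.mpr hp1) N) i
      = ENNReal.ofReal (bf N p i.val) := by
  rw [PMF.binomial_apply]
  change ENNReal.ofReal p ^ (i:ℕ) * (1 - ENNReal.ofReal p) ^ ((Fin.last N : ℕ) - i) * ((N.choose i : ℕ) : ℝ≥0∞) = _
  have h1p : (1 : ℝ≥0∞) - ENNReal.ofReal p = ENNReal.ofReal (1-p) := by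
    rw [ENNReal.ofReal_sub 1 hp0, ENNReal.ofReal_one]
  have h1 : (0:ℝ) ≤ 1 - p := by linarith
  rw [Fin.val_last, h1p, ← ENNReal.ofReal_pow hp0, ← ENNReal.ofReal_pow (by linarith),
    ← ENNReal.ofReal_natCast (N.choose i.val), ← ENNReal.ofReal_mul (by positivity),
    ← ENNReal.ofReal_mul (by positivity)]
  unfold bf
  congr 1
  ring

lemma meas_eq {N : ℕ} {p : ℝ} (hp0 : 0 ≤ p) (hp1 : p ≤ 1) (Q : ℕ → Prop) [DecidablePred Q] :
    (PMF.binomial (Real.toNNReal p) (Real.toNNReal_le_one.mpr hp1) N).toMeasure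
        {x : Fin (N+1) | Q x.val}
      = ENNReal.ofReal (∑ k ∈ (range (N+1)).filter Q, bf N p k) := by
  rw [PMF.toMeasure_apply_fintype]
  have step1 : ∀ x : Fin (N+1), ({x : Fin (N+1) | Q x.val}).indicator
      (⇑(PMF.binomial (Real.toNNReal p) (Real.toNNReal_le_one.mpr hp1) N)) x
      = (fun k : ℕ => if Q k then ENNReal.ofReal (bf N p k) else 0) x.val := by
    intro x
    simp only [Set.indicator_apply, Set.mem_setOf_eq]
    split_ifs with h
    · exact binomial_apply_ofReal hp0 hp1 x
    · rfl
  rw [Finset.sum_congr rfl (fun x _ => step1 x),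
    Fin.sum_univ_eq_sum_range (fun k : ℕ => if Q k then ENNReal.ofReal (bf N p k) else 0),
    ← Finset.sum_filter, ← ENNReal.ofReal_sum_of_nonneg]
  intro k hk
  unfold bf
  have : (0:ℝ) ≤ 1-p := by linarith
  positivity


open MeasureTheory in
lemma final_step {α : Type*} [MeasurableSpace α] (μ : Measure α) [IsProbabilityMeasure μ]
    {S T1 T2 T3 : Set α} (hS : MeasurableSet S) (hsub : Sᶜ ⊆ T1 ∪ T2 ∪ T3) {γ : ℝ}
    (hγ0 : 0 ≤ γ) (h1 : μ T1 ≤ ENNReal.ofReal (γ/4)) (h2 : μ T2 ≤ ENNReal.ofReal (γ/4))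
    (h3 : μ T3 ≤ ENNReal.ofReal (γ/4)) : ENNReal.ofReal (1-γ) ≤ μ S := by
  have hc : μ Sᶜ ≤ ENNReal.ofReal γ := by
    calc μ Sᶜ ≤ μ (T1 ∪ T2 ∪ T3) := measure_mono hsub
    _ ≤ μ (T1 ∪ T2) + μ T3 := measure_union_le _ _
    _ ≤ (μ T1 + μ T2) + μ T3 := add_le_add_left (measure_union_le _ _) _
    _ ≤ (ENNReal.ofReal (γ/4) + ENNReal.ofReal (γ/4)) + ENNReal.ofReal (γ/4) :=
        add_le_add (add_le_add h1 h2) h3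
    _ = ENNReal.ofReal (γ/4 + γ/4 + γ/4) := by
        rw [ENNReal.ofReal_add (by positivity) (by positivity),
          ENNReal.ofReal_add (by positivity) (by positivity)]
    _ ≤ ENNReal.ofReal γ := ENNReal.ofReal_le_ofReal (by linarith)
  have hS' : μ S = 1 - μ Sᶜ := by
    rw [prob_compl_eq_one_sub hS, ENNReal.sub_sub_cancel ENNReal.one_ne_top prob_le_one]
  rw [hS']
  calc ENNReal.ofReal (1-γ) = 1 - ENNReal.ofReal γ := by
        rw [ENNReal.ofReal_sub 1 hγ0, ENNReal.ofReal_one]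
  _ ≤ 1 - μ Sᶜ := tsub_le_tsub_left hc 1

set_option maxHeartbeats 4000000 in
/-- Let `ε > 0`, `γ ∈ (0, 1/2)`, `p∘ ∈ (0,1]`, `p ∈ [0,1]`, and let `N` be a
positive integer with `N ≥ 3·e^ε·log(4/γ) / ((1−e^{−ε})²·p∘)`.  If `X` is a
binomial random variable with parameters `N` and `p`, and `p̂ = X/N`, then with
probability at least `1 − γ`: (i) `|p̂ − p| ≤ ε·(p + p∘)`; and (ii) if
`p ≥ e^{−ε}·p∘` then `e^{−ε}·p ≤ p̂ ≤ e^{ε}·p`, while if `p < e^{−ε}·p∘` then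
`p̂ < p∘`. -/
theorem stmt_5 (ε γ p₀ p : ℝ) (hε : 0 < ε) (hγ : γ ∈ Set.Ioo (0 : ℝ) (1 / 2))
    (hp₀ : p₀ ∈ Set.Ioc (0 : ℝ) 1) (hp : p ∈ Set.Icc (0 : ℝ) 1)
    (N : ℕ) (hN : 0 < N)
    (hNbig : 3 * Real.exp ε * Real.log (4 / γ) / ((1 - Real.exp (-ε)) ^ 2 * p₀) ≤ (N : ℝ)) :
    ENNReal.ofReal (1 - γ) ≤
      (PMF.binomial (Real.toNNReal p) (Real.toNNReal_le_one.mpr hp.2) N).toMeasure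
        {X : Fin (N + 1) |
          |(X : ℝ) / N - p| ≤ ε * (p + p₀)
          ∧ (Real.exp (-ε) * p₀ ≤ p →
              Real.exp (-ε) * p ≤ (X : ℝ) / N ∧ (X : ℝ) / N ≤ Real.exp ε * p)
          ∧ (p < Real.exp (-ε) * p₀ → (X : ℝ) / N < p₀)} := by
  classical
  obtain ⟨hγ0, hγh⟩ := hγ
  obtain ⟨hp₀0, hp₀1⟩ := hp₀
  have hp0 : 0 ≤ p := hp.1
  have hp1 : p ≤ 1 := hp.2
  set L := Real.log (4 / γ) with hLdef
  set δ := 1 - Real.exp (-ε) with hδdef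
  have hexpneg : 0 < Real.exp (-ε) := Real.exp_pos _
  have hexppos : 0 < Real.exp ε := Real.exp_pos _
  have hδ0 : 0 < δ := by
    have : Real.exp (-ε) < 1 := Real.exp_lt_one_iff.2 (by linarith)
    simp only [hδdef]; linarith
  have hδ1 : δ < 1 := by simp only [hδdef]; linarith
  have hδε : δ ≤ ε := by
    have := Real.add_one_le_exp (-ε)
    simp only [hδdef]; linarith
  have hx1 : 1 ≤ Real.exp ε := Real.one_le_exp hε.le
  have hee : Real.exp (-ε) * Real.exp ε = 1 := by
    rw [← Real.exp_add]; simp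
  have hL0 : 0 < L := Real.log_pos (by rw [lt_div_iff₀ hγ0]; linarith)
  have hexpL : Real.exp (-L) = γ / 4 := by
    rw [Real.exp_neg, Real.exp_log (by positivity), inv_div]
  have hNr : (0:ℝ) < N := by exact_mod_cast hN
  have hN1 : 3 * Real.exp ε * L ≤ (N:ℝ) * (δ^2 * p₀) := by
    rw [div_le_iff₀ (by positivity)] at hNbig
    linarith
  set μ := (PMF.binomial (Real.toNNReal p) (Real.toNNReal_le_one.mpr hp.2) N).toMeasure with hμdef
  set S := {X : Fin (N + 1) |
          |(X : ℝ) / N - p| ≤ ε * (p + p₀)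
          ∧ (Real.exp (-ε) * p₀ ≤ p →
              Real.exp (-ε) * p ≤ (X : ℝ) / N ∧ (X : ℝ) / N ≤ Real.exp ε * p)
          ∧ (p < Real.exp (-ε) * p₀ → (X : ℝ) / N < p₀)} with hSdef
  -- B3 bound, common to both cases
  have hB3sum : ∑ k ∈ (range (N+1)).filter
        (fun k : ℕ => (N:ℝ)*(p + ε*(p+p₀)) ≤ (k:ℝ)), bf N p k ≤ γ/4 := by
    have ha : 0 < ε*(p+p₀) := by positivity
    refine (bernstein_upper hp0 hp1 ha).trans ?_
    rw [← hexpL]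
    apply Real.exp_le_exp.2
    apply neg_le_neg
    rw [le_div_iff₀ (by positivity)]
    set a := ε*(p+p₀) with hadef
    have hap : ε*p ≤ a := by simp only [hadef]; nlinarith
    have hap0 : ε*p₀ ≤ a := by simp only [hadef]; nlinarith
    have hδ2 : δ^2 ≤ ε^2 := by nlinarith
    have h1 : (2+ε) * L ≤ (N:ℝ)*(ε^2*p₀) := by
      have h1b : (2+ε)*L ≤ 3*Real.exp ε*L := by
        have : 2+ε ≤ 3*Real.exp ε := by nlinarith [Real.add_one_le_exp ε]
        exact mul_le_mul_of_nonneg_right this hL0.le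
      have h1a : (N:ℝ)*(δ^2*p₀) ≤ (N:ℝ)*(ε^2*p₀) :=
        mul_le_mul_of_nonneg_left (mul_le_mul_of_nonneg_right hδ2 hp₀0.le) hNr.le
      linarith
    have h2 : ε*(2*p+a) ≤ (2+ε)*a := by nlinarith [hap]
    have h3 : ε*(L*(2*p+a)) ≤ ε*((N:ℝ)*a^2) := by
      calc ε*(L*(2*p+a)) = L*(ε*(2*p+a)) := by ring
      _ ≤ L*((2+ε)*a) := mul_le_mul_of_nonneg_left h2 hL0.le
      _ = ((2+ε)*L)*a := by ring
      _ ≤ ((N:ℝ)*(ε^2*p₀))*a := mul_le_mul_of_nonneg_right h1 ha.le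
      _ = ((N:ℝ)*ε*a)*(ε*p₀) := by ring
      _ ≤ ((N:ℝ)*ε*a)*a :=
        mul_le_mul_of_nonneg_left hap0 (by positivity)
      _ = ε*((N:ℝ)*a^2) := by ring
    exact le_of_mul_le_mul_left h3 hε
  have hδ2b : δ^2 ≤ ε^2 := by nlinarith
  have hNε : 3*L ≤ (N:ℝ)*(ε^2*p₀) := by
    have h1a : (N:ℝ)*(δ^2*p₀) ≤ (N:ℝ)*(ε^2*p₀) :=
      mul_le_mul_of_nonneg_left (mul_le_mul_of_nonneg_right hδ2b hp₀0.le) hNr.le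
    nlinarith [hL0.le, hx1]
  have hμB3 : μ {x : Fin (N+1) | (N:ℝ)*(p + ε*(p+p₀)) ≤ ((x : ℕ) : ℝ)} ≤ ENNReal.ofReal (γ/4) := by
    rw [hμdef]
    refine le_of_eq_of_le ?_ (ENNReal.ofReal_le_ofReal hB3sum)
    exact meas_eq (N:=N) hp.1 hp.2 (fun k : ℕ => (N:ℝ)*(p + ε*(p+p₀)) ≤ (k:ℝ))
  haveI hprob : MeasureTheory.IsProbabilityMeasure μ := by
    rw [hμdef]; infer_instance
  have hSmeas : MeasurableSet S := MeasurableSet.of_discrete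
  by_cases hcase : Real.exp (-ε) * p₀ ≤ p
  · -- Case 1 : p ≥ e^{-ε} p₀
    have hppos : 0 < p := lt_of_lt_of_le (by positivity) hcase
    have k2 : 3*L ≤ (N:ℝ)*δ^2*p := by
      have e1 : Real.exp (-ε) * (3*Real.exp ε*L) = 3*L := by
        have h : Real.exp (-ε) * (3*Real.exp ε*L) = 3*(Real.exp (-ε)*Real.exp ε)*L := by ring
        rw [h, hee]; ring
      have k1 : Real.exp (-ε) * ((N:ℝ)*(δ^2*p₀)) ≤ (N:ℝ)*δ^2*p := by
        have h := mul_le_mul_of_nonneg_left hcase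
          (by positivity : (0:ℝ) ≤ (N:ℝ)*δ^2)
        calc Real.exp (-ε) * ((N:ℝ)*(δ^2*p₀)) = (N:ℝ)*δ^2*(Real.exp (-ε)*p₀) := by ring
        _ ≤ (N:ℝ)*δ^2*p := h
      have h := mul_le_mul_of_nonneg_left hN1 hexpneg.le
      rw [e1] at h
      exact h.trans k1
    have hB1sum : ∑ k ∈ (range (N+1)).filter
        (fun k : ℕ => (k:ℝ) ≤ (N:ℝ)*(p - δ*p)), bf N p k ≤ γ/4 := by
      have hb : 0 < δ*p := by positivity
      refine (bernstein_lower hppos hp1 hb (by nlinarith)).trans ?_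
      rw [← hexpL]
      apply Real.exp_le_exp.2
      apply neg_le_neg
      rw [le_div_iff₀ (by positivity)]
      have hk := mul_le_mul_of_nonneg_right k2 hppos.le
      have hLp : 0 ≤ L*p := mul_nonneg hL0.le hppos.le
      nlinarith [hk, hLp]
    have hB2sum : ∑ k ∈ (range (N+1)).filter
        (fun k : ℕ => (N:ℝ)*(p + (Real.exp ε - 1)*p) ≤ (k:ℝ)), bf N p k ≤ γ/4 := by
      have hx1' : 1 < Real.exp ε := by nlinarith [Real.add_one_le_exp ε]
      have ha : 0 < (Real.exp ε - 1)*p := by nlinarith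
      refine (bernstein_upper hp0 hp1 ha).trans ?_
      rw [← hexpL]
      apply Real.exp_le_exp.2
      apply neg_le_neg
      rw [le_div_iff₀ (by nlinarith)]
      have hδe : Real.exp ε * δ = Real.exp ε - 1 := by
        have h : Real.exp ε * δ = Real.exp ε - Real.exp (-ε) * Real.exp ε := by
          rw [hδdef]; ring
        rw [h, hee]
      have hr : (N:ℝ)*((Real.exp ε - 1)*p)^2 = (Real.exp ε)^2*(((N:ℝ)*δ^2*p)*p) := by
        rw [← hδe]; ring
      rw [hr]
      calc L*(2*p+(Real.exp ε - 1)*p) = (1+Real.exp ε)*(L*p) := by ring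
      _ ≤ (3*(Real.exp ε)^2)*(L*p) := by
          apply mul_le_mul_of_nonneg_right (by nlinarith) (by positivity)
      _ = (Real.exp ε)^2*((3*L)*p) := by ring
      _ ≤ (Real.exp ε)^2*(((N:ℝ)*δ^2*p)*p) := by
          apply mul_le_mul_of_nonneg_left
            (mul_le_mul_of_nonneg_right k2 hppos.le) (by positivity)
    have hμB1 : μ {x : Fin (N+1) | ((x : ℕ) : ℝ) ≤ (N:ℝ)*(p - δ*p)}
        ≤ ENNReal.ofReal (γ/4) := by
      rw [hμdef]
      refine le_of_eq_of_le ?_ (ENNReal.ofReal_le_ofReal hB1sum)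
      exact meas_eq (N:=N) hp.1 hp.2 (fun k : ℕ => (k:ℝ) ≤ (N:ℝ)*(p - δ*p))
    have hμB2 : μ {x : Fin (N+1) | (N:ℝ)*(p + (Real.exp ε - 1)*p) ≤ ((x : ℕ) : ℝ)}
        ≤ ENNReal.ofReal (γ/4) := by
      rw [hμdef]
      refine le_of_eq_of_le ?_ (ENNReal.ofReal_le_ofReal hB2sum)
      exact meas_eq (N:=N) hp.1 hp.2
        (fun k : ℕ => (N:ℝ)*(p + (Real.exp ε - 1)*p) ≤ (k:ℝ))
    have hcover : Sᶜ ⊆ {x : Fin (N+1) | ((x : ℕ) : ℝ) ≤ (N:ℝ)*(p - δ*p)}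
        ∪ {x : Fin (N+1) | (N:ℝ)*(p + (Real.exp ε - 1)*p) ≤ ((x : ℕ) : ℝ)}
        ∪ {x : Fin (N+1) | (N:ℝ)*(p + ε*(p+p₀)) ≤ ((x : ℕ) : ℝ)} := by
      intro x hx
      by_contra hmem
      simp only [Set.mem_union, Set.mem_setOf_eq, not_or, not_le] at hmem
      obtain ⟨⟨h1, h2⟩, h3⟩ := hmem
      apply hx
      have hd1 : p - δ*p < ((x:ℕ):ℝ)/N := by
        rw [lt_div_iff₀ hNr]; nlinarith
      have hd2 : ((x:ℕ):ℝ)/N < p + (Real.exp ε - 1)*p := by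
        rw [div_lt_iff₀ hNr]; nlinarith
      have hd3 : ((x:ℕ):ℝ)/N < p + ε*(p+p₀) := by
        rw [div_lt_iff₀ hNr]; nlinarith
      have hδpe : δ*p ≤ ε*(p+p₀) := by nlinarith
      simp only [hSdef, Set.mem_setOf_eq]
      refine ⟨abs_le.2 ⟨by nlinarith [hd1, hδpe], by linarith [hd3]⟩, fun _ => ⟨?_, ?_⟩,
        fun hlt => absurd hlt (not_lt.2 hcase)⟩
      · have h : Real.exp (-ε)*p = p - δ*p := by rw [hδdef]; ring
        linarith
      · have h : Real.exp ε * p = p + (Real.exp ε - 1)*p := by ring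
        linarith
    exact final_step μ hSmeas hcover hγ0.le hμB1 hμB2 hμB3
  · -- Case 2 : p < e^{-ε} p₀
    push_neg at hcase
    have hel : Real.exp (-ε) ≤ 1 := Real.exp_le_one_iff.2 (by linarith)
    have hpp₀ : p < p₀ := by nlinarith
    have hB1sum : ∑ k ∈ (range (N+1)).filter
        (fun k : ℕ => (k:ℝ) ≤ (N:ℝ)*(p - ε*(p+p₀))), bf N p k ≤ γ/4 := by
      by_cases hbp : ε*(p+p₀) ≤ p
      · have hppos : 0 < p := lt_of_lt_of_le (by positivity) hbp
        refine (bernstein_lower hppos hp1 (by positivity) hbp).trans ?_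
        rw [← hexpL]
        apply Real.exp_le_exp.2
        apply neg_le_neg
        rw [le_div_iff₀ (by positivity)]
        have t1 : L*(2*p) ≤ L*(2*p₀) := by nlinarith
        have t2 : 3*L*p₀ ≤ ((N:ℝ)*(ε^2*p₀))*p₀ :=
          mul_le_mul_of_nonneg_right hNε hp₀0.le
        have hsq0 : p₀*p₀ ≤ (p+p₀)^2 := by nlinarith
        have t3 : ((N:ℝ)*(ε^2*p₀))*p₀ ≤ (N:ℝ)*(ε*(p+p₀))^2 := by
          calc ((N:ℝ)*(ε^2*p₀))*p₀ = ((N:ℝ)*ε^2)*(p₀*p₀) := by ring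
          _ ≤ ((N:ℝ)*ε^2)*((p+p₀)^2) := by
              apply mul_le_mul_of_nonneg_left hsq0 (by positivity)
          _ = (N:ℝ)*(ε*(p+p₀))^2 := by ring
        have hLp0 : 0 ≤ L*p₀ := mul_nonneg hL0.le hp₀0.le
        linarith [t1, t2, t3, hLp0]
      · push_neg at hbp
        have hempty : (range (N+1)).filter
            (fun k : ℕ => (k:ℝ) ≤ (N:ℝ)*(p - ε*(p+p₀))) = ∅ := by
          rw [Finset.filter_eq_empty_iff]
          intro k _
          have hneg : (N:ℝ)*(p - ε*(p+p₀)) < 0 :=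
            mul_neg_of_pos_of_neg hNr (by linarith)
          push_neg
          have : (0:ℝ) ≤ (k:ℝ) := Nat.cast_nonneg k
          linarith
        rw [hempty, Finset.sum_empty]
        positivity
    have hB2sum : ∑ k ∈ (range (N+1)).filter
        (fun k : ℕ => (N:ℝ)*(p + (p₀ - p)) ≤ (k:ℝ)), bf N p k ≤ γ/4 := by
      have ha : 0 < p₀ - p := by linarith
      refine (bernstein_upper hp0 hp1 ha).trans ?_
      rw [← hexpL]
      apply Real.exp_le_exp.2
      apply neg_le_neg
      rw [le_div_iff₀ (by linarith)]
      -- L*(2*p+(p₀-p)) ≤ N*(p₀-p)^2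
      have hd : Real.exp (-ε)*p₀ = p₀ - δ*p₀ := by rw [hδdef]; ring
      have hgap : δ*p₀ < p₀ - p := by linarith
      have hN2 : 3*L ≤ (N:ℝ)*(δ^2*p₀) := by nlinarith [hL0.le, hx1]
      have hsq : (N:ℝ)*(δ^2*p₀)*p₀ ≤ (N:ℝ)*(p₀-p)^2 := by
        have h1 : δ*p₀ ≤ p₀ - p := hgap.le
        have h2 : (δ*p₀)^2 ≤ (p₀-p)^2 := pow_le_pow_left₀ (by positivity) h1 2
        have h3 := mul_le_mul_of_nonneg_left h2 hNr.le
        nlinarith [h3]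
      have hlhs : L*(2*p+(p₀-p)) ≤ L*(2*p₀) := by nlinarith [hL0.le]
      have hmid := mul_le_mul_of_nonneg_right hN2 hp₀0.le
      have hLp0 : 0 ≤ L*p₀ := mul_nonneg hL0.le hp₀0.le
      linarith [hlhs, hmid, hsq, hLp0]
    have hμB1 : μ {x : Fin (N+1) | ((x : ℕ) : ℝ) ≤ (N:ℝ)*(p - ε*(p+p₀))}
        ≤ ENNReal.ofReal (γ/4) := by
      rw [hμdef]
      refine le_of_eq_of_le ?_ (ENNReal.ofReal_le_ofReal hB1sum)
      exact meas_eq (N:=N) hp.1 hp.2 (fun k : ℕ => (k:ℝ) ≤ (N:ℝ)*(p - ε*(p+p₀)))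
    have hμB2 : μ {x : Fin (N+1) | (N:ℝ)*(p + (p₀ - p)) ≤ ((x : ℕ) : ℝ)}
        ≤ ENNReal.ofReal (γ/4) := by
      rw [hμdef]
      refine le_of_eq_of_le ?_ (ENNReal.ofReal_le_ofReal hB2sum)
      exact meas_eq (N:=N) hp.1 hp.2 (fun k : ℕ => (N:ℝ)*(p + (p₀ - p)) ≤ (k:ℝ))
    have hcover : Sᶜ ⊆ {x : Fin (N+1) | ((x : ℕ) : ℝ) ≤ (N:ℝ)*(p - ε*(p+p₀))}
        ∪ {x : Fin (N+1) | (N:ℝ)*(p + (p₀ - p)) ≤ ((x : ℕ) : ℝ)}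
        ∪ {x : Fin (N+1) | (N:ℝ)*(p + ε*(p+p₀)) ≤ ((x : ℕ) : ℝ)} := by
      intro x hx
      by_contra hmem
      simp only [Set.mem_union, Set.mem_setOf_eq, not_or, not_le] at hmem
      obtain ⟨⟨h1, h2⟩, h3⟩ := hmem
      apply hx
      have hd1 : p - ε*(p+p₀) < ((x:ℕ):ℝ)/N := by
        rw [lt_div_iff₀ hNr]; nlinarith
      have hd2 : ((x:ℕ):ℝ)/N < p + (p₀ - p) := by
        rw [div_lt_iff₀ hNr]; nlinarith
      have hd3 : ((x:ℕ):ℝ)/N < p + ε*(p+p₀) := by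
        rw [div_lt_iff₀ hNr]; nlinarith
      simp only [hSdef, Set.mem_setOf_eq]
      refine ⟨abs_le.2 ⟨by linarith, by linarith⟩,
        fun hge => absurd hge (not_le.2 hcase), fun _ => by linarith⟩
    exact final_step μ hSmeas hcover hγ0.le hμB1 hμB2 hμB3
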